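/- The polynomial f(λ) = λ^{n+m} − λ^n − λ^m (with m a nonzero integer, n a positive integer, viewed after clearing denominators when m < 0) has no multiple complex root; that is, f(λ) = 0 and f'(λ) = 0 have no common solution λ ∈ ℂ∖{0}. -/

import Mathlib

lemma aux_pow (b d : ℕ) (hb : 0 < b) (hd : 0 < d) : b ^ b * d ^ d < (b + d) ^ (b + d) := by
  calc b ^ b * d ^ d < (b + d) ^ b * (b + d) ^ d :=
        Nat.mul_lt_mul_of_lt_of_lt (Nat.pow_lt_pow_left (by omega) hb.ne')
          (Nat.pow_lt_pow_left (by omega) hd.ne')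
    _ = (b + d) ^ (b + d) := (pow_add _ _ _).symm

/-- The Laurent polynomial `f(λ) = λ^(n+m) - λ^n - λ^m` (m ≠ 0, n > 0) has no
multiple root: `f(λ) = 0` and `f'(λ) = 0` have no common solution `λ ∈ ℂ \ {0}`. -/
theorem stmt_0 (m n : ℤ) (hm : m ≠ 0) (hn : 0 < n) :
    ¬ ∃ l : ℂ, l ≠ 0 ∧ l ^ (n + m) - l ^ n - l ^ m = 0 ∧
      ((n + m : ℤ) : ℂ) * l ^ (n + m - 1) - (n : ℂ) * l ^ (n - 1)
        - (m : ℂ) * l ^ (m - 1) = 0 := by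
  rintro ⟨l, hl, h1, h2⟩
  have hz : ∀ k : ℤ, l ^ (k - 1) * l = l ^ k := by
    intro k
    rw [zpow_sub_one₀ hl, inv_mul_cancel_right₀ hl]
  -- Multiply the derivative equation by l
  have h2' : ((n : ℂ) + m) * l ^ (n + m) - n * l ^ n - m * l ^ m = 0 := by
    have h := congrArg (· * l) h2
    simp only [sub_mul, zero_mul, mul_assoc, hz] at h
    push_cast at h
    linear_combination h
  have hAB : l ^ (n + m) = l ^ n * l ^ m := zpow_add₀ hl n m
  rw [hAB] at h1 h2'
  have hA0 : l ^ n ≠ 0 := zpow_ne_zero _ hl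
  have hB0 : l ^ m ≠ 0 := zpow_ne_zero _ hl
  have key1 : (m : ℂ) * l ^ n + n * l ^ m = 0 := by
    linear_combination h2' - ((n : ℂ) + m) * h1
  have hA : (m : ℂ) * l ^ n = (m : ℂ) - n := by
    have h : ((m : ℂ) * l ^ n - ((m : ℂ) - n)) * l ^ m = 0 := by
      linear_combination (m : ℂ) * h1 + key1
    rcases mul_eq_zero.mp h with h | h
    · exact sub_eq_zero.mp h
    · exact absurd h hB0
  have hB : (n : ℂ) * l ^ m = (n : ℂ) - m := by
    have h : ((n : ℂ) * l ^ m - ((n : ℂ) - m)) * l ^ n = 0 := by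
      linear_combination (n : ℂ) * h1 + key1
    rcases mul_eq_zero.mp h with h | h
    · exact sub_eq_zero.mp h
    · exact absurd h hA0
  rcases eq_or_ne m n with hmn | hmn
  · -- m = n : then m * l^n = 0, impossible
    rw [hmn, sub_self] at hA
    rcases mul_eq_zero.mp hA with h | h
    · have : n = 0 := by exact_mod_cast h
      omega
    · exact hA0 h
  -- take absolute values
  set s := ‖l‖ with hsdef
  have hs : 0 < s := norm_pos_iff.mpr hl
  set d : ℕ := (m - n).natAbs with hddef
  have hd0 : 0 < d := Int.natAbs_pos.mpr (sub_ne_zero.mpr hmn)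
  have e1 : |(m : ℝ)| * s ^ n = (d : ℝ) := by
    have h := congrArg (‖·‖) hA
    rw [norm_mul, norm_zpow] at h
    rw [show ((m : ℂ) - n) = ((m - n : ℤ) : ℂ) by push_cast; ring] at h
    rw [Complex.norm_intCast, Complex.norm_intCast] at h
    rw [h, hddef, Nat.cast_natAbs, Int.cast_abs]
  have e2 : (n : ℝ) * s ^ m = (d : ℝ) := by
    have h := congrArg (‖·‖) hB
    rw [norm_mul, norm_zpow] at h
    rw [show ((n : ℂ) - m) = ((n - m : ℤ) : ℂ) by push_cast; ring] at h
    rw [Complex.norm_intCast, Complex.norm_intCast] at h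
    rw [show |(n : ℝ)| = (n : ℝ) from abs_of_pos (by exact_mod_cast hn)] at h
    rw [h, hddef, show (m - n).natAbs = (n - m).natAbs from by omega,
      Nat.cast_natAbs, Int.cast_abs]
  set b : ℕ := n.toNat with hbdef
  have hb1 : (b : ℤ) = n := Int.toNat_of_nonneg hn.le
  have hb0 : 0 < b := by omega
  have hsn : s ^ n = s ^ b := by rw [← hb1, zpow_natCast]
  rcases lt_or_gt_of_ne hm with hmneg | hmpos
  · -- m < 0 : contradiction via s > 1 and s < 1
    set k : ℕ := (-m).toNat with hkdef
    have hk1 : (k : ℤ) = -m := Int.toNat_of_nonneg (by omega)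
    have hk0 : 0 < k := by omega
    have hsm : s ^ m = (s ^ k)⁻¹ := by
      rw [show m = -(k : ℤ) by omega, zpow_neg, zpow_natCast]
    have habs : |(m : ℝ)| = (k : ℝ) := by
      rw [abs_of_neg (show (m : ℝ) < 0 by exact_mod_cast hmneg)]
      exact_mod_cast hk1.symm
    have hdval : (d : ℤ) = n - m := by
      rw [hddef]; omega
    have hdk : (k : ℝ) < (d : ℝ) := by exact_mod_cast (by omega : (k : ℤ) < d)
    have hdb : (b : ℝ) < (d : ℝ) := by exact_mod_cast (by omega : (b : ℤ) < d)
    rw [hsn, habs] at e1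
    rw [hsm, show (n : ℝ) = (b : ℝ) by exact_mod_cast hb1.symm] at e2
    -- from e1 : k * s^b = d > k, so s^b > 1, so s > 1
    have hsb1 : 1 < s ^ b := by
      have hk' : (0 : ℝ) < k := by exact_mod_cast hk0
      nlinarith
    have hs1 : 1 < s := by
      by_contra h
      push_neg at h
      exact absurd hsb1 (not_lt.mpr (pow_le_one₀ hs.le h))
    -- from e2 : b * (s^k)⁻¹ = d > b, so (s^k)⁻¹ > 1, so s^k < 1
    have hsk1 : 1 < (s ^ k)⁻¹ := by
      have hb' : (0 : ℝ) < b := by exact_mod_cast hb0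
      nlinarith
    have : s ^ k < 1 := by
      have hpos : 0 < s ^ k := pow_pos hs k
      have hmul : (s ^ k) * (s ^ k)⁻¹ = 1 := mul_inv_cancel₀ hpos.ne'
      nlinarith [hsk1, hpos, hmul]
    exact absurd this (not_lt.mpr (one_le_pow₀ hs1.le))
  · -- m > 0
    set a : ℕ := m.toNat with hadef
    have ha1 : (a : ℤ) = m := Int.toNat_of_nonneg hmpos.le
    have ha0 : 0 < a := by omega
    have hsm : s ^ m = s ^ a := by rw [← ha1, zpow_natCast]
    have habs : |(m : ℝ)| = (a : ℝ) := by
      rw [abs_of_pos (by exact_mod_cast hmpos)]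
      exact_mod_cast ha1.symm
    rw [hsn, habs] at e1
    rw [hsm, show (n : ℝ) = (b : ℝ) by exact_mod_cast hb1.symm] at e2
    -- e1 : a * s^b = d, e2 : b * s^a = d
    have key : ((a ^ a * d ^ b : ℕ) : ℝ) = ((d ^ a * b ^ b : ℕ) : ℝ) := by
      have p1 : (a : ℝ) ^ a * (s ^ (a * b)) = (d : ℝ) ^ a := by
        have := congrArg (· ^ a) e1
        simp only [mul_pow, ← pow_mul] at this
        rw [mul_comm b a] at this
        exact this
      have p2 : (b : ℝ) ^ b * (s ^ (a * b)) = (d : ℝ) ^ b := by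
        have := congrArg (· ^ b) e2
        simp only [mul_pow, ← pow_mul] at this
        exact this
      have ht : (0 : ℝ) < s ^ (a * b) := pow_pos hs _
      push_cast
      have : ((a : ℝ) ^ a * (d : ℝ) ^ b) * s ^ (a * b) = ((d : ℝ) ^ a * (b : ℝ) ^ b) * s ^ (a * b) := by
        calc ((a : ℝ) ^ a * (d : ℝ) ^ b) * s ^ (a * b)
            = ((a : ℝ) ^ a * s ^ (a * b)) * (d : ℝ) ^ b := by ring
          _ = (d : ℝ) ^ a * (d : ℝ) ^ b := by rw [p1]
          _ = (d : ℝ) ^ a * ((b : ℝ) ^ b * s ^ (a * b)) := by rw [p2]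
          _ = ((d : ℝ) ^ a * (b : ℝ) ^ b) * s ^ (a * b) := by ring
      exact mul_right_cancel₀ ht.ne' this
    have heq : a ^ a * d ^ b = d ^ a * b ^ b := by exact_mod_cast key
    rcases lt_or_gt_of_ne hmn with hlt | hgt
    · -- m < n : b = a + d
      have hdval : (d : ℤ) = n - m := by rw [hddef]; omega
      have hba : b = a + d := by omega
      have h3 : a ^ a * d ^ d = b ^ b := by
        have h4 : (a ^ a * d ^ d) * d ^ a = b ^ b * d ^ a := by
          calc (a ^ a * d ^ d) * d ^ a = a ^ a * d ^ (a + d) := by ring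
            _ = a ^ a * d ^ b := by rw [hba]
            _ = d ^ a * b ^ b := heq
            _ = b ^ b * d ^ a := by ring
        exact Nat.eq_of_mul_eq_mul_right (pow_pos hd0 a) h4
      have := aux_pow a d ha0 hd0
      rw [← hba] at this
      omega
    · -- m > n : a = b + d
      have hdval : (d : ℤ) = m - n := by rw [hddef]; omega
      have hab : a = b + d := by omega
      have h3 : b ^ b * d ^ d = a ^ a := by
        have h4 : (b ^ b * d ^ d) * d ^ b = a ^ a * d ^ b := by
          calc (b ^ b * d ^ d) * d ^ b = b ^ b * d ^ (b + d) := by ring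
            _ = b ^ b * d ^ a := by rw [hab]
            _ = d ^ a * b ^ b := by ring
            _ = a ^ a * d ^ b := heq.symm
        exact Nat.eq_of_mul_eq_mul_right (pow_pos hd0 b) h4
      have := aux_pow b d hb0 hd0
      rw [← hab] at this
      omega
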